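/- Let m ∈ ℕ, let Σ ∈ ℝ^{m×m} be invertible, and for each i ∈ {1,…,m} let u_i ∈ ℝ^{d_i} be a unit vector. Define the block matrix R with blocks R_{ij} = u_i Σ_{ij} u_jᵀ + δ_{ij}(I − u_i u_iᵀ), where Σ_{ij} is the (i,j) scalar entry of Σ. Then det(R) = det(Σ). -/

import Mathlib

open Matrix

/-- If `R` has blocks `R_{ij} = u_i Σ_{ij} u_jᵀ + δ_{ij}(I - u_i u_iᵀ)` with each `u_i`
a unit vector and `Σ` invertible, then `det R = det Σ`. -/
theorem stmt5 {m : ℕ} {d : Fin m → ℕ}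
    (Sig : Matrix (Fin m) (Fin m) ℝ) (hSig : IsUnit Sig.det)
    (u : (i : Fin m) → Fin (d i) → ℝ) (hu : ∀ i, u i ⬝ᵥ u i = 1) :
    let R : Matrix ((i : Fin m) × Fin (d i)) ((i : Fin m) × Fin (d i)) ℝ :=
      Matrix.of fun p q =>
        u p.1 p.2 * Sig p.1 q.1 * u q.1 q.2 + (if p = q then 1 else 0)
          - (if p.1 = q.1 then u p.1 p.2 * u q.1 q.2 else 0)
    R.det = Sig.det := by
  intro R
  set B : Matrix ((i : Fin m) × Fin (d i)) (Fin m) ℝ :=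
    Matrix.of (fun p j => if p.1 = j then u p.1 p.2 else 0) with hB
  have hBtB : Bᵀ * B = 1 := by
    ext i j
    simp only [mul_apply, transpose_apply, hB, of_apply, one_apply]
    rw [← Finset.univ_sigma_univ, Finset.sum_sigma]
    rcases eq_or_ne i j with rfl | hij
    · rw [if_pos rfl]
      have := hu i
      rw [dotProduct] at this
      rw [Finset.sum_eq_single i]
      · simpa using this
      · intro b _ hb
        simp [hb]
      · simp
    · rw [if_neg hij]
      apply Finset.sum_eq_zero
      intro a _
      apply Finset.sum_eq_zero
      intro x _
      rcases eq_or_ne a i with rfl | ha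
      · simp [hij]
      · simp [ha]
  have hR : R = 1 + B * ((Sig - 1) * Bᵀ) := by
    ext p q
    simp only [R, Matrix.add_apply, mul_apply, transpose_apply, Matrix.sub_apply, hB, of_apply, one_apply]
    rw [Finset.sum_eq_single p.1]
    · rw [if_pos rfl]
      rw [Finset.sum_eq_single q.1]
      · rw [if_pos rfl]
        rcases eq_or_ne p.1 q.1 with h | h
        · simp only [if_pos h]
          ring
        · have hpq : p ≠ q := fun hc => h (congrArg Sigma.fst hc)
          simp only [if_neg h, if_neg hpq]
          ring
      · intro b _ hb
        simp [hb.symm]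
      · simp
    · intro b _ hb
      simp [hb.symm]
    · simp
  rw [hR, ← Matrix.mul_assoc, Matrix.det_one_add_mul_comm, ← Matrix.mul_assoc, hBtB,
    Matrix.one_mul, add_sub_cancel]
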